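/- Let U ⊆ ℝ^n be open, let i ∈ {1,…,n}, and let p, d ∈ ℕ. Suppose f : U → ℝ is C^{p+d} and that for every j ∈ {0,…,d−1} and every x ∈ U with x_i = 0 one has ∂^j f/∂x_i^j (x) = 0. Let g : U → ℝ be a C^p function satisfying f(x) = x_i^d · g(x) for all x ∈ U. Then for every multi-index α ∈ ℕ^n with |α| ≤ p and every x ∈ U with x_i = 0: (1/α_i!) · ∂^α g(x) = (1/(α_i+d)!) · ∂^{α+d·e_i} f(x), where e_i is the i-th standard unit multi-index in ℕ^n. -/

import Mathlib

/-- Partial derivative in the `i`-th coordinate. -/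
noncomputable def pd {n : ℕ} (i : Fin n) (f : (Fin n → ℝ) → ℝ) : (Fin n → ℝ) → ℝ :=
  fun x => fderiv ℝ f x (Pi.single i 1)

/-- Iterated partial derivative `∂^α` for a multi-index `α : Fin n → ℕ`. -/
noncomputable def md {n : ℕ} (α : Fin n → ℕ) (f : (Fin n → ℝ) → ℝ) : (Fin n → ℝ) → ℝ :=
  (List.finRange n).foldr (fun i g => (pd i)^[α i] g) f

open Asymptotics Filter

noncomputable def mdl {n : ℕ} (l : List (Fin n)) (α : Fin n → ℕ)
    (f : (Fin n → ℝ) → ℝ) : (Fin n → ℝ) → ℝ :=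
  l.foldr (fun i g => (pd i)^[α i] g) f

theorem md_eq_mdl {n : ℕ} (α : Fin n → ℕ) (f : (Fin n → ℝ) → ℝ) :
    md α f = mdl (List.finRange n) α f := rfl

theorem mdl_append {n : ℕ} (l₁ l₂ : List (Fin n)) (α : Fin n → ℕ) (f : (Fin n → ℝ) → ℝ) :
    mdl (l₁ ++ l₂) α f = mdl l₁ α (mdl l₂ α f) := by
  simp [mdl, List.foldr_append]

theorem mdl_cons {n : ℕ} (j : Fin n) (l : List (Fin n)) (α : Fin n → ℕ) (f : (Fin n → ℝ) → ℝ) :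
    mdl (j :: l) α f = (pd j)^[α j] (mdl l α f) := rfl

theorem mdl_congr {n : ℕ} (l : List (Fin n)) {α α' : Fin n → ℕ} (h : ∀ j ∈ l, α j = α' j)
    (f : (Fin n → ℝ) → ℝ) : mdl l α f = mdl l α' f := by
  induction l with
  | nil => rfl
  | cons j l ih =>
    rw [mdl_cons, mdl_cons, h j (by simp), ih (fun k hk => h k (by simp [hk]))]

theorem finRange_split {n : ℕ} (i : Fin n) :
    List.finRange n = (List.finRange n).take i ++ i :: (List.finRange n).drop (i+1) := by
  have hlen : (i : ℕ) < (List.finRange n).length := by simp [i.isLt]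
  conv_lhs => rw [← List.take_append_drop i (List.finRange n)]
  rw [List.drop_eq_getElem_cons hlen]
  simp

theorem mem_take_lt {n : ℕ} (i : Fin n) (j : Fin n) (hj : j ∈ (List.finRange n).take i) :
    (j : ℕ) < i := by
  obtain ⟨k, hk, rfl⟩ := List.mem_iff_getElem.1 hj
  have hk' : k < (i:ℕ) := lt_of_lt_of_le hk (by simp)
  simp [List.getElem_take, hk']

theorem mem_drop_gt {n : ℕ} (i : Fin n) (j : Fin n) (hj : j ∈ (List.finRange n).drop (i+1)) :
    (i : ℕ) < j := by
  obtain ⟨k, hk, rfl⟩ := List.mem_iff_getElem.1 hj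
  simp [List.getElem_drop]
  omega

variable {n : ℕ} {U : Set (Fin n → ℝ)}

theorem contDiffOn_pd (hU : IsOpen U) (i : Fin n)
    {q : ℕ} {f : (Fin n → ℝ) → ℝ} (hf : ContDiffOn ℝ (q+1 : ℕ) f U) :
    ContDiffOn ℝ (q : ℕ) (pd i f) U := by
  have h1 : ContDiffOn ℝ (q : ℕ) (fderiv ℝ f) U := by
    apply hf.fderiv_of_isOpen hU
    exact_mod_cast le_refl _
  exact h1.clm_apply contDiffOn_const

theorem contDiffOn_pd_iter (hU : IsOpen U) (i : Fin n)
    {q k : ℕ} {f : (Fin n → ℝ) → ℝ} (hf : ContDiffOn ℝ (q+k : ℕ) f U) :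
    ContDiffOn ℝ (q : ℕ) ((pd i)^[k] f) U := by
  induction k generalizing f with
  | zero => simpa using hf
  | succ k ih =>
    rw [Function.iterate_succ_apply]
    exact ih (contDiffOn_pd hU i (by exact_mod_cast hf))

theorem diffAt_of_contDiffOn (hU : IsOpen U) {q : ℕ} {f : (Fin n → ℝ) → ℝ}
    (hf : ContDiffOn ℝ (q+1 : ℕ) f U) {x : Fin n → ℝ} (hx : x ∈ U) :
    DifferentiableAt ℝ f x := by
  have : DifferentiableOn ℝ f U := hf.differentiableOn (by simp)
  exact this.differentiableAt (hU.mem_nhds hx)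

theorem hasDerivAt_line {h : (Fin n → ℝ) → ℝ} {x v : Fin n → ℝ} {t : ℝ}
    (hd : DifferentiableAt ℝ h (x + t • v)) :
    HasDerivAt (fun s => h (x + s • v)) (fderiv ℝ h (x + t • v) v) t := by
  have hline : HasDerivAt (fun s : ℝ => x + s • v) v t := by
    simpa using ((hasDerivAt_id t).smul_const v).const_add x
  exact (hd.hasFDerivAt.comp_hasDerivAt t hline)

theorem slice_step (hU : IsOpen U) {i j : Fin n} (hij : j ≠ i) {v w : (Fin n → ℝ) → ℝ}
    (c₁ c₂ : ℝ)
    (hv : ∀ x ∈ U, DifferentiableAt ℝ v x) (hw : ∀ x ∈ U, DifferentiableAt ℝ w x)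
    (heq : ∀ x ∈ U, x i = 0 → c₁ * v x = c₂ * w x) :
    ∀ x ∈ U, x i = 0 → c₁ * pd j v x = c₂ * pd j w x := by
  intro x hx hxi
  set e : Fin n → ℝ := Pi.single j 1 with he
  have hx0 : x + (0:ℝ) • e = x := by simp
  have hv' : HasDerivAt (fun s : ℝ => c₁ * v (x + s • e)) (c₁ * pd j v x) 0 := by
    have := (hasDerivAt_line (h := v) (x := x) (v := e) (t := 0) (by rw [hx0]; exact hv x hx)).const_mul c₁
    rw [hx0] at this
    exact this
  have hw' : HasDerivAt (fun s : ℝ => c₂ * w (x + s • e)) (c₂ * pd j w x) 0 := by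
    have := (hasDerivAt_line (h := w) (x := x) (v := e) (t := 0) (by rw [hx0]; exact hw x hx)).const_mul c₂
    rw [hx0] at this
    exact this
  -- eventual equality of the two one-variable functions near 0
  have hev : (fun s : ℝ => c₁ * v (x + s • e)) =ᶠ[nhds 0] fun s : ℝ => c₂ * w (x + s • e) := by
    have hcont : Continuous (fun s : ℝ => x + s • e) := by continuity
    have hmem : ∀ᶠ s : ℝ in nhds 0, x + s • e ∈ U := by
      have : Filter.Tendsto (fun s : ℝ => x + s • e) (nhds 0) (nhds x) := by
        have := hcont.tendsto 0
        simpa using this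
      exact this.eventually_mem (hU.mem_nhds hx)
    filter_upwards [hmem] with s hs
    apply heq _ hs
    simp [he, Pi.single_eq_of_ne hij.symm, hxi]
  rw [← hv'.deriv, ← hw'.deriv]
  exact hev.deriv_eq

theorem slice_iter (hU : IsOpen U) {i j : Fin n} (hij : j ≠ i) (c₁ c₂ : ℝ) :
    ∀ (k : ℕ) {v w : (Fin n → ℝ) → ℝ}, ContDiffOn ℝ (k : ℕ) v U → ContDiffOn ℝ (k : ℕ) w U →
    (∀ x ∈ U, x i = 0 → c₁ * v x = c₂ * w x) →
    ∀ x ∈ U, x i = 0 → c₁ * (pd j)^[k] v x = c₂ * (pd j)^[k] w x := by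
  intro k
  induction k with
  | zero => intro v w _ _ heq; simpa using heq
  | succ k ih =>
    intro v w hv hw heq
    have hv' : ContDiffOn ℝ ((k:ℕ)+1) v U := by exact_mod_cast hv
    have hw' : ContDiffOn ℝ ((k:ℕ)+1) w U := by exact_mod_cast hw
    have h1 : ∀ x ∈ U, x i = 0 → c₁ * pd j v x = c₂ * pd j w x :=
      slice_step hU hij c₁ c₂ (fun x hx => diffAt_of_contDiffOn hU hv' hx)
        (fun x hx => diffAt_of_contDiffOn hU hw' hx) heq
    intro x hx hxi
    rw [Function.iterate_succ_apply, Function.iterate_succ_apply]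
    exact ih (contDiffOn_pd hU j hv') (contDiffOn_pd hU j hw') h1 x hx hxi

theorem contDiffOn_mdl (hU : IsOpen U) (A : List (Fin n)) (α : Fin n → ℕ) :
    ∀ {q : ℕ} {v : (Fin n → ℝ) → ℝ}, ContDiffOn ℝ ((q + (A.map α).sum : ℕ)) v U →
    ContDiffOn ℝ (q : ℕ) (mdl A α v) U := by
  induction A with
  | nil => intro q v hv; simpa [mdl] using hv
  | cons j A ih =>
    intro q v hv
    rw [mdl_cons]
    apply contDiffOn_pd_iter hU j (q := q) (k := α j)
    apply ih
    have : q + α j + (A.map α).sum = q + ((j :: A).map α).sum := by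
      simp [List.sum_cons]; ring
    rw [this]
    exact hv

theorem slice_list (hU : IsOpen U) {i : Fin n} (A : List (Fin n)) (hA : ∀ j ∈ A, j ≠ i)
    (α : Fin n → ℕ) (c₁ c₂ : ℝ) :
    ∀ {v w : (Fin n → ℝ) → ℝ}, ContDiffOn ℝ ((A.map α).sum : ℕ) v U →
    ContDiffOn ℝ ((A.map α).sum : ℕ) w U →
    (∀ x ∈ U, x i = 0 → c₁ * v x = c₂ * w x) →
    ∀ x ∈ U, x i = 0 → c₁ * mdl A α v x = c₂ * mdl A α w x := by
  induction A with
  | nil => intro v w _ _ heq; simpa [mdl] using heq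
  | cons j A ih =>
    intro v w hv hw heq
    have hsum : (((j :: A).map α).sum : ℕ) = α j + (A.map α).sum := by simp [List.sum_cons]
    rw [hsum] at hv hw
    have hAv : ContDiffOn ℝ ((α j : ℕ)) (mdl A α v) U := by
      apply contDiffOn_mdl hU A α
      exact hv
    have hAw : ContDiffOn ℝ ((α j : ℕ)) (mdl A α w) U := by
      apply contDiffOn_mdl hU A α
      exact hw
    have heq' : ∀ x ∈ U, x i = 0 → c₁ * mdl A α v x = c₂ * mdl A α w x :=
      ih (fun k hk => hA k (by simp [hk])) (hv.of_le (by exact_mod_cast Nat.le_add_left _ _))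
        (hw.of_le (by exact_mod_cast Nat.le_add_left _ _)) heq
    intro x hx hxi
    rw [mdl_cons, mdl_cons]
    exact slice_iter hU (hA j (by simp)) c₁ c₂ (α j) hAv hAw heq' x hx hxi

theorem rel_step (hU : IsOpen U) {i j : Fin n} (hij : j ≠ i) (d : ℕ)
    {q : ℕ} {f' g' : (Fin n → ℝ) → ℝ}
    (hf' : ∀ x ∈ U, DifferentiableAt ℝ f' x)
    (hg' : ∀ x ∈ U, DifferentiableAt ℝ g' x)
    (hrel : ∀ x ∈ U, f' x = x i ^ d * g' x) :
    ∀ x ∈ U, pd j f' x = x i ^ d * pd j g' x := by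
  intro x hx
  have hc : HasFDerivAt (fun y : Fin n → ℝ => y i ^ d)
      ((d * x i ^ (d-1)) • (ContinuousLinearMap.proj i : (Fin n → ℝ) →L[ℝ] ℝ)) x := by
    have hproj : HasFDerivAt (fun y : Fin n → ℝ => y i)
        (ContinuousLinearMap.proj i : (Fin n → ℝ) →L[ℝ] ℝ) x :=
      (ContinuousLinearMap.proj i : (Fin n → ℝ) →L[ℝ] ℝ).hasFDerivAt
    exact (hasDerivAt_pow d (x i)).comp_hasFDerivAt x hproj
  have hev : f' =ᶠ[nhds x] fun y => y i ^ d * g' y := by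
    filter_upwards [hU.mem_nhds hx] with y hy using hrel y hy
  have hprod : HasFDerivAt (fun y : Fin n → ℝ => y i ^ d * g' y)
      (x i ^ d • fderiv ℝ g' x + (((d:ℝ) * x i ^ (d-1)) • (ContinuousLinearMap.proj i : (Fin n → ℝ) →L[ℝ] ℝ)).smulRight (g' x)) x :=
    hc.mul' (hg' x hx).hasFDerivAt
  have : fderiv ℝ f' x = x i ^ d • fderiv ℝ g' x + (((d:ℝ) * x i ^ (d-1)) • (ContinuousLinearMap.proj i : (Fin n → ℝ) →L[ℝ] ℝ)).smulRight (g' x) := by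
    rw [hev.fderiv_eq]
    exact hprod.fderiv
  unfold pd
  rw [this]
  simp [Pi.single_eq_of_ne hij.symm]

theorem rel_iter (hU : IsOpen U) {i j : Fin n} (hij : j ≠ i) (d : ℕ) :
    ∀ (k q : ℕ) {f' g' : (Fin n → ℝ) → ℝ},
    ContDiffOn ℝ (q + k + d : ℕ) f' U → ContDiffOn ℝ (q + k : ℕ) g' U →
    (∀ x ∈ U, f' x = x i ^ d * g' x) →
    ContDiffOn ℝ (q + d : ℕ) ((pd j)^[k] f') U ∧ ContDiffOn ℝ (q : ℕ) ((pd j)^[k] g') U ∧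
      (∀ x ∈ U, (pd j)^[k] f' x = x i ^ d * (pd j)^[k] g' x) := by
  intro k
  induction k with
  | zero => intro q f' g' hf' hg' hrel; exact ⟨by simpa using hf', by simpa using hg', by simpa using hrel⟩
  | succ k ih =>
    intro q f' g' hf' hg' hrel
    have hf'' : ContDiffOn ℝ ((q + k + d : ℕ) + 1) f' U := by
      have : (q + (k+1) + d : ℕ) = (q + k + d) + 1 := by omega
      rw [this] at hf'; exact_mod_cast hf'
    have hg'' : ContDiffOn ℝ ((q + k : ℕ) + 1) g' U := by
      have : (q + (k+1) : ℕ) = (q + k) + 1 := by omega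
      rw [this] at hg'; exact_mod_cast hg'
    have hpf : ContDiffOn ℝ (q + k + d : ℕ) (pd j f') U := contDiffOn_pd hU j (by exact_mod_cast hf'')
    have hpg : ContDiffOn ℝ (q + k : ℕ) (pd j g') U := contDiffOn_pd hU j (by exact_mod_cast hg'')
    have hrel' : ∀ x ∈ U, pd j f' x = x i ^ d * pd j g' x := by
      apply rel_step hU hij d (q := 0)
        (fun x hx => diffAt_of_contDiffOn hU (q := q + k + d) hf'' hx)
        (fun x hx => diffAt_of_contDiffOn hU (q := q + k) hg'' hx) hrel
    have := ih q hpf hpg hrel'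
    simp only [Function.iterate_succ_apply]
    exact this

theorem rel_list (hU : IsOpen U) {i : Fin n} (d : ℕ) (α : Fin n → ℕ) :
    ∀ (B : List (Fin n)), (∀ j ∈ B, j ≠ i) →
    ∀ (q : ℕ) {f' g' : (Fin n → ℝ) → ℝ},
    ContDiffOn ℝ (q + (B.map α).sum + d : ℕ) f' U →
    ContDiffOn ℝ (q + (B.map α).sum : ℕ) g' U →
    (∀ x ∈ U, f' x = x i ^ d * g' x) →
    ContDiffOn ℝ (q + d : ℕ) (mdl B α f') U ∧ ContDiffOn ℝ (q : ℕ) (mdl B α g') U ∧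
      (∀ x ∈ U, mdl B α f' x = x i ^ d * mdl B α g' x) := by
  intro B
  induction B with
  | nil => intro _ q f' g' hf' hg' hrel; exact ⟨by simpa [mdl] using hf', by simpa [mdl] using hg', by simpa [mdl] using hrel⟩
  | cons j B ih =>
    intro hB q f' g' hf' hg' hrel
    have hsum : ((j :: B).map α).sum = α j + (B.map α).sum := by simp
    have h1 : ContDiffOn ℝ ((q + α j) + (B.map α).sum + d : ℕ) f' U := by
      have : (q + α j) + (B.map α).sum + d = q + ((j :: B).map α).sum + d := by rw [hsum]; ring
      rw [this]; exact hf'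
    have h2 : ContDiffOn ℝ ((q + α j) + (B.map α).sum : ℕ) g' U := by
      have : (q + α j) + (B.map α).sum = q + ((j :: B).map α).sum := by rw [hsum]; ring
      rw [this]; exact hg'
    obtain ⟨hBf, hBg, hBrel⟩ := ih (fun k hk => hB k (by simp [hk])) (q + α j) h1 h2 hrel
    have h3 : ContDiffOn ℝ (q + α j + d : ℕ) (mdl B α f') U := hBf
    have h4 : ContDiffOn ℝ (q + α j : ℕ) (mdl B α g') U := hBg
    have h5 : q + α j + d = q + α j + d := rfl
    obtain ⟨hf2, hg2, hrel2⟩ := rel_iter hU (hB j (by simp)) d (α j) q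
      (by have : q + α j + d = q + α j + d := rfl; exact h3) h4 hBrel
    exact ⟨by rw [mdl_cons]; exact hf2, by rw [mdl_cons]; exact hg2,
      by rw [mdl_cons]; intro x hx; rw [mdl_cons]; exact hrel2 x hx⟩

theorem taylorO (K : ℕ) (φ : ℕ → ℝ → ℝ) (s : Set ℝ) (hs : IsOpen s) (h0 : (0:ℝ) ∈ s)
    (hder : ∀ k < K, ∀ t ∈ s, HasDerivAt (φ k) (φ (k+1) t) t)
    (hcont : ContinuousOn (φ K) s) :
    (fun t => φ 0 t - ∑ j ∈ Finset.range (K+1), φ j 0 * t^j / (j.factorial : ℝ))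
      =o[nhds 0] fun t => t^K := by
  induction K generalizing φ with
  | zero =>
    have h1 : (fun t : ℝ => t ^ 0) = fun _ : ℝ => (1:ℝ) := by funext t; simp
    rw [h1, isLittleO_one_iff]
    have : Filter.Tendsto (φ 0) (nhds 0) (nhds (φ 0 0)) :=
      (hcont.continuousAt (hs.mem_nhds h0)).tendsto
    have := this.sub (tendsto_const_nhds (x := φ 0 0))
    simpa using this
  | succ K ih =>
    -- the derivative remainder
    have hR' : (fun t => φ 1 t - ∑ j ∈ Finset.range (K+1), φ (j+1) 0 * t^j / (j.factorial : ℝ))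
        =o[nhds 0] fun t => t^K := by
      apply ih (fun k => φ (k+1))
      · intro k hk t ht
        exact hder (k+1) (by omega) t ht
      · exact hcont
    set R : ℝ → ℝ := fun t => φ 0 t - ∑ j ∈ Finset.range (K+2), φ j 0 * t^j / (j.factorial : ℝ)
      with hRdef
    set R' : ℝ → ℝ := fun t => φ 1 t - ∑ j ∈ Finset.range (K+1), φ (j+1) 0 * t^j / (j.factorial : ℝ)
      with hR'def
    have hderR : ∀ t ∈ s, HasDerivAt R (R' t) t := by
      intro t ht
      have h1 : HasDerivAt (φ 0) (φ 1 t) t := hder 0 (by omega) t ht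
      have h2 : HasDerivAt (fun u => ∑ j ∈ Finset.range (K+2), φ j 0 * u^j / (j.factorial : ℝ))
          (∑ j ∈ Finset.range (K+1), φ (j+1) 0 * t^j / (j.factorial : ℝ)) t := by
        have h3 : HasDerivAt (fun u => ∑ j ∈ Finset.range (K+2), φ j 0 * u^j / (j.factorial : ℝ))
            (∑ j ∈ Finset.range (K+2), φ j 0 * ((j:ℝ) * t^(j-1)) / (j.factorial : ℝ)) t := by
          apply HasDerivAt.fun_sum
          intro j _
          simpa [div_eq_mul_inv, mul_assoc, mul_comm, mul_left_comm] using
            ((hasDerivAt_pow j t).const_mul (φ j 0 / (j.factorial : ℝ)))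
        convert h3 using 1
        rw [Finset.sum_range_succ' _ (K+1)]
        simp only [Nat.cast_zero, zero_mul, mul_zero, zero_div, add_zero]
        apply Finset.sum_congr rfl
        intro j _
        have hstep : (j+1) - 1 = j := by omega
        rw [hstep, Nat.factorial_succ]
        have hj : ((j:ℝ)+1) ≠ 0 := by positivity
        have hf : ((j.factorial : ℝ)) ≠ 0 := by positivity
        push_cast
        field_simp
      exact h1.sub h2
    have hR0 : R 0 = 0 := by
      have : ∑ j ∈ Finset.range (K+2), φ j 0 * (0:ℝ)^j / (j.factorial : ℝ) = φ 0 0 := by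
        rw [Finset.sum_eq_single_of_mem 0 (by simp)]
        · simp
        · intro j _ hj
          rw [zero_pow hj]
          simp
      simp [hRdef, this]
    rw [isLittleO_iff]
    intro c hc
    have hev : ∀ᶠ u : ℝ in nhds 0, (‖R' u‖ ≤ c * ‖u^K‖ ∧ u ∈ s) :=
      (isLittleO_iff.mp hR' hc).and (hs.eventually_mem h0)
    rw [Metric.eventually_nhds_iff] at hev ⊢
    obtain ⟨δ, hδ, hball⟩ := hev
    refine ⟨δ, hδ, ?_⟩
    intro t ht
    simp only [Real.dist_eq, sub_zero] at ht
    have hseg : ∀ u ∈ segment ℝ (0:ℝ) t, |u| ≤ |t| := by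
      intro u hu
      rw [segment_eq_uIcc, Set.uIcc, Set.mem_Icc] at hu
      rw [abs_le]
      constructor
      · calc -|t| ≤ min 0 t := le_min (neg_nonpos.2 (abs_nonneg t)) (neg_abs_le t)
          _ ≤ u := hu.1
      · calc u ≤ max 0 t := hu.2
          _ ≤ |t| := max_le (abs_nonneg t) (le_abs_self t)
    have hsegmem : ∀ u ∈ segment ℝ (0:ℝ) t, (‖R' u‖ ≤ c * ‖u^K‖ ∧ u ∈ s) := by
      intro u hu
      apply hball
      simp only [Real.dist_eq, sub_zero]
      exact lt_of_le_of_lt (hseg u hu) ht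
    have hmvt : ‖R t - R 0‖ ≤ (c * |t|^K) * ‖t - 0‖ := by
      apply Convex.norm_image_sub_le_of_norm_hasDerivWithin_le
        (f' := R') (s := segment ℝ (0:ℝ) t)
      · intro u hu
        exact (hderR u (hsegmem u hu).2).hasDerivWithinAt
      · intro u hu
        calc ‖R' u‖ ≤ c * ‖u^K‖ := (hsegmem u hu).1
          _ = c * |u|^K := by rw [norm_pow]; rfl
          _ ≤ c * |t|^K := by
              apply mul_le_mul_of_nonneg_left _ (le_of_lt hc)
              exact pow_le_pow_left₀ (abs_nonneg u) (hseg u hu) K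
      · exact convex_segment _ _
      · exact left_mem_segment _ _ _
      · exact right_mem_segment _ _ _
    rw [hR0, sub_zero, sub_zero] at hmvt
    calc ‖R t‖ ≤ (c * |t|^K) * ‖t‖ := hmvt
      _ = c * ‖t^(K+1)‖ := by
          rw [norm_pow]
          show c * |t|^K * |t| = c * |t|^(K+1)
          rw [pow_succ]
          ring

theorem coeff_zero : ∀ (K : ℕ) (c : ℕ → ℝ),
    ((fun t => ∑ j ∈ Finset.range (K+1), c j * t^j) =o[nhdsWithin (0:ℝ) {(0:ℝ)}ᶜ]
      fun t => t^K) → ∀ j ≤ K, c j = 0 := by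
  intro K
  induction K with
  | zero =>
    intro c h j hj
    interval_cases j
    have hfun : (fun t : ℝ => ∑ j ∈ Finset.range 1, c j * t^j) = fun _ : ℝ => c 0 := by
      funext t; simp
    have hone : (fun t : ℝ => t^0) = fun _ : ℝ => (1:ℝ) := by funext t; simp
    rw [hfun, hone, isLittleO_one_iff] at h
    exact tendsto_nhds_unique tendsto_const_nhds h
  | succ K ih =>
    intro c h
    -- first coefficient vanishes
    have hc0 : c 0 = 0 := by
      have h1 : Filter.Tendsto (fun t : ℝ => ∑ j ∈ Finset.range (K+2), c j * t^j)
          (nhdsWithin (0:ℝ) {(0:ℝ)}ᶜ) (nhds 0) := by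
        apply h.isBigO.trans_tendsto
        have : Filter.Tendsto (fun t : ℝ => t^(K+1)) (nhds (0:ℝ)) (nhds ((0:ℝ)^(K+1))) :=
          (continuous_pow (K+1)).tendsto 0
        rw [zero_pow (Nat.succ_ne_zero K)] at this
        exact this.mono_left nhdsWithin_le_nhds
      have h2 : Filter.Tendsto (fun t : ℝ => ∑ j ∈ Finset.range (K+2), c j * t^j)
          (nhdsWithin (0:ℝ) {(0:ℝ)}ᶜ) (nhds (∑ j ∈ Finset.range (K+2), c j * (0:ℝ)^j)) := by
        apply Filter.Tendsto.mono_left _ nhdsWithin_le_nhds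
        exact ((continuous_finset_sum _ fun j _ => (continuous_const.mul (continuous_pow j))).tendsto 0)
      have h3 : ∑ j ∈ Finset.range (K+2), c j * (0:ℝ)^j = c 0 := by
        rw [Finset.sum_eq_single_of_mem 0 (by simp)]
        · simp
        · intro j _ hj; rw [zero_pow hj]; simp
      rw [h3] at h2
      exact tendsto_nhds_unique h2 h1
    -- divide by t
    have hdiv : (fun t => ∑ j ∈ Finset.range (K+1), c (j+1) * t^j)
        =o[nhdsWithin (0:ℝ) {(0:ℝ)}ᶜ] fun t => t^K := by
      rw [isLittleO_iff]
      intro ε hε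
      have hev := isLittleO_iff.mp h hε
      filter_upwards [hev, self_mem_nhdsWithin] with t h1 h2
      have ht : t ≠ 0 := h2
      have hfact : ∑ j ∈ Finset.range (K+2), c j * t^j
          = t * ∑ j ∈ Finset.range (K+1), c (j+1) * t^j := by
        rw [Finset.sum_range_succ' _ (K+1)]
        rw [hc0, Finset.mul_sum]
        simp only [mul_zero, zero_mul, add_zero, pow_zero, mul_one]
        apply Finset.sum_congr rfl
        intro j _
        ring
      rw [hfact] at h1
      rw [norm_mul, norm_pow] at h1
      have h1' : ‖t‖ * ‖∑ j ∈ Finset.range (K+1), c (j+1) * t^j‖ ≤ ‖t‖ * (ε * ‖t‖^K) := by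
        calc ‖t‖ * ‖∑ j ∈ Finset.range (K+1), c (j+1) * t^j‖
            ≤ ε * ‖t‖^(K+1) := h1
          _ = ‖t‖ * (ε * ‖t‖^K) := by ring
      have htn : (0:ℝ) < ‖t‖ := norm_pos_iff.2 ht
      have := le_of_mul_le_mul_left h1' htn
      rw [norm_pow]
      exact this
    have hrest := ih (fun j => c (j+1)) hdiv
    intro j hj
    cases j with
    | zero => exact hc0
    | succ j => exact hrest j (by omega)

theorem oneD (d m : ℕ) (φ ψ : ℕ → ℝ → ℝ) (s : Set ℝ) (hs : IsOpen s) (h0 : (0:ℝ) ∈ s)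
    (hφ : ∀ k < m + d, ∀ t ∈ s, HasDerivAt (φ k) (φ (k+1) t) t)
    (hψ : ∀ k < m, ∀ t ∈ s, HasDerivAt (ψ k) (ψ (k+1) t) t)
    (hφc : ContinuousOn (φ (m+d)) s) (hψc : ContinuousOn (ψ m) s)
    (hrel : ∀ t ∈ s, φ 0 t = t^d * ψ 0 t) :
    (1/(m.factorial:ℝ)) * ψ m 0 = (1/((m+d).factorial:ℝ)) * φ (m+d) 0 := by
  have T1 := taylorO (m+d) φ s hs h0 hφ hφc
  have T2 := taylorO m ψ s hs h0 hψ hψc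
  have T2' : (fun t : ℝ => t^d * (ψ 0 t - ∑ j ∈ Finset.range (m+1), ψ j 0 * t^j / (j.factorial:ℝ)))
      =o[nhds 0] fun t : ℝ => t^(m+d) := by
    have := (isBigO_refl (fun t : ℝ => t^d) (nhds 0)).mul_isLittleO T2
    have heq : (fun t : ℝ => t^d * t^m) = fun t : ℝ => t^(m+d) := by
      funext t; rw [← pow_add]; ring_nf
    rwa [heq] at this
  set C : ℕ → ℝ := fun j => φ j 0 / (j.factorial : ℝ)
      - (if d ≤ j then ψ (j-d) 0 / ((j-d).factorial : ℝ) else 0) with hC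
  have hDrew : (fun t : ℝ => ∑ j ∈ Finset.range (m+d+1), C j * t^j)
      =ᶠ[nhds 0] fun t : ℝ =>
        (t^d * (ψ 0 t - ∑ j ∈ Finset.range (m+1), ψ j 0 * t^j / (j.factorial:ℝ)))
        - (φ 0 t - ∑ j ∈ Finset.range (m+d+1), φ j 0 * t^j / (j.factorial:ℝ)) := by
    filter_upwards [hs.eventually_mem h0] with t ht
    rw [hrel t ht]
    have hsplit : ∑ j ∈ Finset.range (m+d+1), C j * t^j
        = (∑ j ∈ Finset.range (m+d+1), φ j 0 * t^j / (j.factorial:ℝ))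
          - ∑ j ∈ Finset.range (m+d+1),
              (if d ≤ j then ψ (j-d) 0 / ((j-d).factorial : ℝ) else 0) * t^j := by
      rw [← Finset.sum_sub_distrib]
      apply Finset.sum_congr rfl
      intro j _
      rw [hC]
      ring
    have hsecond : ∑ j ∈ Finset.range (m+d+1),
          (if d ≤ j then ψ (j-d) 0 / ((j-d).factorial : ℝ) else 0) * t^j
        = t^d * ∑ j ∈ Finset.range (m+1), ψ j 0 * t^j / (j.factorial:ℝ) := by
      rw [Finset.range_eq_Ico, ← Finset.sum_Ico_consecutive _ (Nat.zero_le d) (by omega : d ≤ m+d+1)]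
      have hz : ∑ j ∈ Finset.Ico 0 d,
          (if d ≤ j then ψ (j-d) 0 / ((j-d).factorial : ℝ) else 0) * t^j = 0 := by
        apply Finset.sum_eq_zero
        intro j hj
        rw [Finset.mem_Ico] at hj
        rw [if_neg (by omega)]
        ring
      rw [hz, zero_add, Finset.sum_Ico_eq_sum_range]
      have hmd : m + d + 1 - d = m + 1 := by omega
      rw [hmd, Finset.mul_sum]
      apply Finset.sum_congr rfl
      intro j _
      rw [if_pos (by omega : d ≤ d + j)]
      have : d + j - d = j := by omega
      rw [this, pow_add]
      ring
    rw [hsplit, hsecond]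
    ring
  have hDo : (fun t : ℝ => ∑ j ∈ Finset.range (m+d+1), C j * t^j)
      =o[nhds 0] fun t : ℝ => t^(m+d) :=
    (T2'.sub T1).congr' hDrew.symm EventuallyEq.rfl
  have hcz := coeff_zero (m+d) C (hDo.mono nhdsWithin_le_nhds) (m+d) le_rfl
  rw [hC] at hcz
  simp only [if_pos (by omega : d ≤ m + d)] at hcz
  have hmd : m + d - d = m := by omega
  rw [hmd] at hcz
  have h1 : (m.factorial : ℝ) ≠ 0 := by positivity
  have h2 : ((m+d).factorial : ℝ) ≠ 0 := by positivity
  field_simp at hcz ⊢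
  linarith

theorem pd_iter_diffAt (hU : IsOpen U) (i : Fin n) {q k : ℕ} {f : (Fin n → ℝ) → ℝ}
    (h : ContDiffOn ℝ (q : ℕ) f U) (hk : k < q) {x : Fin n → ℝ} (hx : x ∈ U) :
    DifferentiableAt ℝ ((pd i)^[k] f) x := by
  have hq : (q : ℕ) = ((q - k - 1) + 1) + k := by omega
  rw [hq] at h
  exact diffAt_of_contDiffOn hU (contDiffOn_pd_iter hU i h) hx

theorem bridge (hU : IsOpen U) (i : Fin n) (d m : ℕ) {F G : (Fin n → ℝ) → ℝ}
    (hF : ContDiffOn ℝ (m+d : ℕ) F U) (hG : ContDiffOn ℝ (m : ℕ) G U)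
    (hrel : ∀ x ∈ U, F x = x i ^ d * G x) :
    ∀ x ∈ U, x i = 0 →
      (1/(m.factorial:ℝ)) * (pd i)^[m] G x = (1/((m+d).factorial:ℝ)) * (pd i)^[m+d] F x := by
  intro x hx hxi
  set e : Fin n → ℝ := Pi.single i 1 with he
  set s : Set ℝ := {t : ℝ | x + t • e ∈ U} with hsdef
  have hline : Continuous (fun t : ℝ => x + t • e) := by continuity
  have hs : IsOpen s := hU.preimage hline
  have h0 : (0:ℝ) ∈ s := by
    simp only [hsdef, Set.mem_setOf_eq, zero_smul, add_zero]
    exact hx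
  have hcoord : ∀ t : ℝ, (x + t • e) i = t := by
    intro t
    simp [he, hxi, Pi.single_eq_same]
  set φ : ℕ → ℝ → ℝ := fun k t => (pd i)^[k] F (x + t • e) with hφdef
  set ψ : ℕ → ℝ → ℝ := fun k t => (pd i)^[k] G (x + t • e) with hψdef
  have key : (1/(m.factorial:ℝ)) * ψ m 0 = (1/((m+d).factorial:ℝ)) * φ (m+d) 0 := by
    apply oneD d m φ ψ s hs h0
    · intro k hk t ht
      have hd : DifferentiableAt ℝ ((pd i)^[k] F) (x + t • e) :=
        pd_iter_diffAt hU i hF (by omega) ht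
      have := hasDerivAt_line (h := (pd i)^[k] F) (x := x) (v := e) (t := t) hd
      have heq : φ (k+1) t = fderiv ℝ ((pd i)^[k] F) (x + t • e) e := by
        rw [hφdef]
        simp only [Function.iterate_succ_apply']
        rfl
      rw [heq]
      exact this
    · intro k hk t ht
      have hd : DifferentiableAt ℝ ((pd i)^[k] G) (x + t • e) :=
        pd_iter_diffAt hU i hG (by omega) ht
      have := hasDerivAt_line (h := (pd i)^[k] G) (x := x) (v := e) (t := t) hd
      have heq : ψ (k+1) t = fderiv ℝ ((pd i)^[k] G) (x + t • e) e := by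
        rw [hψdef]
        simp only [Function.iterate_succ_apply']
        rfl
      rw [heq]
      exact this
    · have hc : ContinuousOn ((pd i)^[m+d] F) U := by
        have : ContDiffOn ℝ ((0:ℕ) : ℕ) ((pd i)^[m+d] F) U :=
          contDiffOn_pd_iter hU i (by simpa using hF)
        exact_mod_cast this.continuousOn
      exact hc.comp hline.continuousOn (fun t ht => ht)
    · have hc : ContinuousOn ((pd i)^[m] G) U := by
        have : ContDiffOn ℝ ((0:ℕ) : ℕ) ((pd i)^[m] G) U :=
          contDiffOn_pd_iter hU i (by simpa using hG)
        exact_mod_cast this.continuousOn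
      exact hc.comp hline.continuousOn (fun t ht => ht)
    · intro t ht
      have := hrel (x + t • e) ht
      rw [hφdef, hψdef]
      simpa [hcoord t] using this
  have h0x : x + (0:ℝ) • e = x := by simp
  rw [hφdef, hψdef] at key
  simpa [h0x] using key

/-- **Derivatives after dividing by a power of a variable.**
Let `f : U → ℝ` be `C^{p+d}` on the open set `U ⊆ ℝⁿ` with
`∂^j f/∂x_i^j (x) = 0` for all `j < d` and all `x ∈ U` with `x_i = 0`, and let `g` be a `C^p`
function on `U` with `f(x) = x_i^d · g(x)` on `U`.  Then for every multi-index `α` with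
`|α| ≤ p` and every `x ∈ U` with `x_i = 0`:
`(1/α_i!)·∂^α g(x) = (1/(α_i+d)!)·∂^{α+d·e_i} f(x)`. -/
theorem stmt5 {n : ℕ} (U : Set (Fin n → ℝ)) (hU : IsOpen U) (i : Fin n) (p d : ℕ)
    (f g : (Fin n → ℝ) → ℝ)
    (hf : ContDiffOn ℝ (p + d : ℕ) f U)
    (hvan : ∀ j < d, ∀ x ∈ U, x i = 0 → (pd i)^[j] f x = 0)
    (hg : ContDiffOn ℝ (p : ℕ) g U)
    (hfg : ∀ x ∈ U, f x = x i ^ d * g x)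
    (α : Fin n → ℕ) (hα : ∑ j, α j ≤ p)
    (x : Fin n → ℝ) (hx : x ∈ U) (hxi : x i = 0) :
    (1 / ((α i).factorial : ℝ)) * md α g x
      = (1 / ((α i + d).factorial : ℝ)) * md (α + Pi.single i d) f x := by
  classical
  set A : List (Fin n) := (List.finRange n).take i with hAdef
  set B : List (Fin n) := (List.finRange n).drop (i+1) with hBdef
  have hA : ∀ j ∈ A, j ≠ i := by
    intro j hj
    have := mem_take_lt i j hj
    exact fun h => by subst h; omega
  have hB : ∀ j ∈ B, j ≠ i := by
    intro j hj
    have := mem_drop_gt i j hj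
    exact fun h => by subst h; omega
  set sA : ℕ := (A.map α).sum with hsA
  set sB : ℕ := (B.map α).sum with hsB
  have htotal : sA + (α i + sB) = ∑ j, α j := by
    rw [Fin.sum_univ_def, finRange_split i]
    simp only [hsA, hsB, hAdef, hBdef, List.map_append, List.map_cons, List.sum_append,
      List.sum_cons]
  set q : ℕ := sA + α i with hq
  have hqsB : q + sB ≤ p := by omega
  -- inner part
  obtain ⟨hF1, hG1, hrel1⟩ := rel_list hU d α B hB q
    (hf.of_le (by exact_mod_cast (by omega : q + sB + d ≤ p + d)))
    (hg.of_le (by exact_mod_cast hqsB)) hfg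
  set F1 := mdl B α f with hF1def
  set G1 := mdl B α g with hG1def
  -- middle (i-direction) part, on the whole slice
  have hslice : ∀ y ∈ U, y i = 0 →
      (1/((α i).factorial:ℝ)) * (pd i)^[α i] G1 y
        = (1/((α i + d).factorial:ℝ)) * (pd i)^[α i + d] F1 y :=
    bridge hU i d (α i)
      (hF1.of_le (by exact_mod_cast (by omega : α i + d ≤ q + d)))
      (hG1.of_le (by exact_mod_cast (by omega : α i ≤ q))) hrel1
  -- outer part
  set v := (pd i)^[α i] G1 with hvdef
  set w := (pd i)^[α i + d] F1 with hwdef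
  have hvC : ContDiffOn ℝ (sA : ℕ) v U := by
    apply contDiffOn_pd_iter hU i
    have : (sA + α i : ℕ) = q := rfl
    rw [this]; exact hG1
  have hwC : ContDiffOn ℝ (sA : ℕ) w U := by
    apply contDiffOn_pd_iter hU i
    have : (sA + (α i + d) : ℕ) = q + d := by omega
    rw [this]; exact hF1
  have houter := slice_list hU A hA α (1/((α i).factorial:ℝ)) (1/((α i + d).factorial:ℝ))
    hvC hwC hslice x hx hxi
  -- rewrite the goal as the outer statement
  have hgoal1 : md α g = mdl A α v := by
    rw [md_eq_mdl, finRange_split i, mdl_append]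
    rfl
  have hcongrA : ∀ j ∈ A, α j = (α + Pi.single i d : Fin n → ℕ) j := by
    intro j hj
    simp [Pi.single_eq_of_ne (hA j hj)]
  have hcongrB : ∀ j ∈ B, (α + Pi.single i d : Fin n → ℕ) j = α j := by
    intro j hj
    simp [Pi.single_eq_of_ne (hB j hj)]
  have hgoal2 : md (α + Pi.single i d) f = mdl A α w := by
    rw [md_eq_mdl, finRange_split i, mdl_append, ← mdl_congr A hcongrA]
    congr 1
    rw [mdl_cons, mdl_congr B hcongrB]
    have h1 : (α + Pi.single i d : Fin n → ℕ) i = α i + d := by simp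
    rw [h1]
  rw [hgoal1, hgoal2]
  exact houter
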